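/- Let n be an even natural number, p = n/2, and let A be a finite set of (p+1)-faces of the n-dimensional Boolean cube with |A| ≤ n/16. Then the lower shadow of A satisfies |∂⁻A| ≥ 2 · |A| · (n/2 + 1) · (15/16). -/

import Mathlib

/-- A point of the cube complex: a word in `{0,1,*}^n`, where `*` is `none`. -/
abbrev Cube (n : ℕ) := Fin n → Option Bool

/-- `f` is a `p`-face of the `n`-cube: exactly `p` coordinates are `*` (i.e. `none`). -/
def IsFace (n p : ℕ) (f : Cube n) : Prop :=
  (Finset.univ.filter (fun i => f i = none)).card = p

/-- The upper shadow of a set of faces: all faces obtained from an element by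
replacing one non-`*` coordinate with `*`. -/
def upperShadow {n : ℕ} (A : Finset (Cube n)) : Finset (Cube n) :=
  A.biUnion (fun f =>
    (Finset.univ.filter (fun i => f i ≠ none)).image (fun i => Function.update f i none))

/-- The lower shadow of a set of faces: all faces obtained from an element by
replacing one `*` coordinate with either `0` or `1`. -/
def lowerShadow {n : ℕ} (A : Finset (Cube n)) : Finset (Cube n) :=
  A.biUnion (fun f =>
    ((Finset.univ ×ˢ (Finset.univ : Finset Bool)).filter (fun q : Fin n × Bool => f q.1 = none)).image
      (fun q : Fin n × Bool => Function.update f q.1 (some q.2)))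

/-- The set of lower faces of a single face. -/
def lfaces {n : ℕ} (f : Cube n) : Finset (Cube n) :=
  ((Finset.univ ×ˢ (Finset.univ : Finset Bool)).filter (fun q : Fin n × Bool => f q.1 = none)).image
      (fun q : Fin n × Bool => Function.update f q.1 (some q.2))

lemma lowerShadow_eq_biUnion {n : ℕ} (A : Finset (Cube n)) :
    lowerShadow A = A.biUnion lfaces := rfl

lemma lfaces_card {n p : ℕ} (f : Cube n) (hf : IsFace n p f) :
    (lfaces f).card = 2 * p := by
  rw [lfaces, Finset.card_image_of_injOn]
  · have : ((Finset.univ ×ˢ (Finset.univ : Finset Bool)).filter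
        (fun q : Fin n × Bool => f q.1 = none))
        = (Finset.univ.filter (fun i => f i = none)) ×ˢ (Finset.univ : Finset Bool) := by
      ext q
      simp [Finset.mem_filter, Finset.mem_product]
    rw [this, Finset.card_product, hf]
    simp [Nat.mul_comm]
  · intro q hq q' hq' h
    simp only [Finset.mem_coe, Finset.mem_filter] at hq hq'
    by_cases hij : q.1 = q'.1
    · have hb : some q.2 = some q'.2 := by
        have h2 : Function.update f q.1 (some q.2) q.1
            = Function.update f q'.1 (some q'.2) q.1 := congrFun h q.1
        rwa [Function.update_self, hij, Function.update_self] at h2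
      exact Prod.ext hij (by simpa using hb)
    · exfalso
      have h2 : Function.update f q.1 (some q.2) q.1
          = Function.update f q'.1 (some q'.2) q.1 := congrFun h q.1
      rw [Function.update_self, Function.update_of_ne (by simpa using hij)] at h2
      rw [hq.2] at h2
      exact Option.some_ne_none _ h2

/-- Two distinct faces share at most one common lower face. -/
lemma lfaces_inter_card {n : ℕ} {f f' : Cube n} (hne : f ≠ f') :
    (lfaces f ∩ lfaces f').card ≤ 1 := by
  rw [Finset.card_le_one]
  -- first, a helper: from membership extract the data
  have hmem : ∀ g ∈ lfaces f ∩ lfaces f',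
      ∃ (i j : Fin n) (b c : Bool), f i = none ∧ f' j = none ∧
        g = Function.update f i (some b) ∧ g = Function.update f' j (some c) := by
    intro g hg
    rw [Finset.mem_inter, lfaces, lfaces] at hg
    obtain ⟨h1, h2⟩ := hg
    simp only [Finset.mem_image, Finset.mem_filter, Finset.mem_product] at h1 h2
    obtain ⟨q, ⟨-, hq⟩, hgq⟩ := h1
    obtain ⟨r, ⟨-, hr⟩, hgr⟩ := h2
    exact ⟨q.1, r.1, q.2, r.2, hq, hr, hgq.symm, hgr.symm⟩
  -- key: the coordinate where f is updated is determined
  intro g₁ hg₁ g₂ hg₂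
  obtain ⟨i₁, j₁, b₁, c₁, hfi₁, hf'j₁, e₁, e₁'⟩ := hmem g₁ hg₁
  obtain ⟨i₂, j₂, b₂, c₂, hfi₂, hf'j₂, e₂, e₂'⟩ := hmem g₂ hg₂
  -- i₁ ≠ j₁, else f = f'
  have hij : ∀ (i j : Fin n) (b c : Bool) (g : Cube n), f i = none → f' j = none →
      g = Function.update f i (some b) → g = Function.update f' j (some c) → i ≠ j := by
    intro i j b c g hfi hf'j eg eg' hij
    apply hne
    funext k
    by_cases hk : k = i
    · rw [hk, hfi, hij, hf'j]
    · have := congrFun (eg.symm.trans eg') k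
      rwa [Function.update_of_ne hk, Function.update_of_ne (hij ▸ hk)] at this
  have hij₁ : i₁ ≠ j₁ := hij i₁ j₁ b₁ c₁ g₁ hfi₁ hf'j₁ e₁ e₁'
  have hij₂ : i₂ ≠ j₂ := hij i₂ j₂ b₂ c₂ g₂ hfi₂ hf'j₂ e₂ e₂'
  -- f' i₁ = some b₁
  have hf'i₁ : f' i₁ = some b₁ := by
    have h2 := congrFun (e₁.symm.trans e₁') i₁
    rw [Function.update_self, Function.update_of_ne hij₁] at h2
    exact h2.symm
  have hf'i₂ : f' i₂ = some b₂ := by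
    have h2 := congrFun (e₂.symm.trans e₂') i₂
    rw [Function.update_self, Function.update_of_ne hij₂] at h2
    exact h2.symm
  -- i₂ = i₁
  have hii : i₂ = i₁ := by
    by_contra hne2
    have hg₂i₁ : g₂ i₁ = none := by
      rw [e₂, Function.update_of_ne (fun h => hne2 h.symm), hfi₁]
    by_cases h : i₁ = j₂
    · rw [e₂', h, Function.update_self] at hg₂i₁
      exact Option.some_ne_none _ hg₂i₁
    · rw [e₂', Function.update_of_ne h, hf'i₁] at hg₂i₁
      exact Option.some_ne_none _ hg₂i₁
  -- b₂ = b₁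
  have hbb : b₂ = b₁ := by
    have h2 := hf'i₂
    rw [hii, hf'i₁] at h2
    exact (Option.some_injective _ h2.symm)
  rw [e₁, e₂, hii, hbb]

theorem lowerShadow_expansion (n : ℕ) (hn : Even n) (p : ℕ) (hp : p = n / 2)
    (A : Finset (Cube n)) (hA : ∀ f ∈ A, IsFace n (p + 1) f)
    (hcard : A.card ≤ n / 16) :
    16 * (lowerShadow A).card ≥ 15 * (2 * (A.card * (n / 2 + 1))) := by
  classical
  set S := lowerShadow A with hS
  set a := A.card with ha
  -- the multiplicity of g
  set t : Cube n → ℕ := fun g => (A.filter (fun f => g ∈ lfaces f)).card with ht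
  -- lfaces f ⊆ S for f ∈ A
  have hsub : ∀ f ∈ A, lfaces f ⊆ S := by
    intro f hf g hg
    rw [hS, lowerShadow_eq_biUnion]
    exact Finset.mem_biUnion.2 ⟨f, hf, hg⟩
  -- Claim 1: ∑ g in S, t g = 2 * (p+1) * a
  have claim1 : ∑ g ∈ S, t g = 2 * (p + 1) * a := by
    have : ∑ g ∈ S, t g = ∑ f ∈ A, (S.filter (fun g => g ∈ lfaces f)).card := by
      simp only [ht, Finset.card_filter]
      exact Finset.sum_comm
    rw [this]
    have : ∀ f ∈ A, (S.filter (fun g => g ∈ lfaces f)).card = 2 * (p + 1) := by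
      intro f hf
      have hfl : S.filter (fun g => g ∈ lfaces f) = lfaces f := by
        ext g
        simp only [Finset.mem_filter]
        exact ⟨fun h => h.2, fun h => ⟨hsub f hf h, h⟩⟩
      rw [hfl, lfaces_card f (hA f hf)]
    rw [Finset.sum_congr rfl this, Finset.sum_const, smul_eq_mul, mul_comm]
  -- Claim 2: ∑ g in S, t g * (t g - 1) ≤ a * a - a
  have claim2 : ∑ g ∈ S, t g * (t g - 1) ≤ a * a - a := by
    have heq : ∀ g, t g * (t g - 1) =
        (A.offDiag.filter (fun q => g ∈ lfaces q.1 ∧ g ∈ lfaces q.2)).card := by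
      intro g
      have : A.offDiag.filter (fun q => g ∈ lfaces q.1 ∧ g ∈ lfaces q.2)
          = (A.filter (fun f => g ∈ lfaces f)).offDiag := by
        ext q
        simp only [Finset.mem_filter, Finset.mem_offDiag]
        tauto
      rw [this, Finset.offDiag_card, Nat.mul_sub_one]
    calc ∑ g ∈ S, t g * (t g - 1)
        = ∑ q ∈ A.offDiag, (S.filter (fun g => g ∈ lfaces q.1 ∧ g ∈ lfaces q.2)).card := by
          simp only [heq, Finset.card_filter]
          exact Finset.sum_comm
      _ ≤ ∑ _q ∈ A.offDiag, 1 := by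
          apply Finset.sum_le_sum
          intro q hq
          have hne : q.1 ≠ q.2 := (Finset.mem_offDiag.1 hq).2.2
          calc (S.filter (fun g => g ∈ lfaces q.1 ∧ g ∈ lfaces q.2)).card
              ≤ (lfaces q.1 ∩ lfaces q.2).card := by
                apply Finset.card_le_card
                intro g hg
                simp only [Finset.mem_filter] at hg
                exact Finset.mem_inter.2 hg.2
            _ ≤ 1 := lfaces_inter_card hne
      _ = a * a - a := by rw [Finset.sum_const, smul_eq_mul, mul_one, Finset.offDiag_card]
  -- pointwise: t g ≤ 1 + t g * (t g - 1), for g ∈ S (where t g ≥ 1, but true always)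
  have key : 2 * (p + 1) * a ≤ S.card + (a * a - a) := by
    calc 2 * (p + 1) * a = ∑ g ∈ S, t g := claim1.symm
      _ ≤ ∑ g ∈ S, (1 + t g * (t g - 1)) := by
          apply Finset.sum_le_sum
          intro g _
          rcases Nat.eq_zero_or_pos (t g) with h | h
          · omega
          · rcases Nat.lt_or_ge (t g) 2 with h2 | h2
            · interval_cases (t g) <;> simp
            · have : t g ≤ t g * (t g - 1) := Nat.le_mul_of_pos_right _ (by omega)
              omega
      _ = S.card + ∑ g ∈ S, t g * (t g - 1) := by
          rw [Finset.sum_add_distrib, Finset.sum_const, smul_eq_mul, mul_one]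
      _ ≤ S.card + (a * a - a) := by omega
  -- arithmetic
  have h2p : 2 * p = n := by
    obtain ⟨k, hk⟩ := hn
    omega
  have h16a : 16 * a ≤ n := by
    calc 16 * a ≤ 16 * (n / 16) := by omega
      _ ≤ n := Nat.mul_div_le n 16
  rw [← hp]
  rcases Nat.eq_zero_or_pos a with h0 | h0
  · rw [h0]; simp
  · obtain ⟨b, hb⟩ : ∃ b, a = b + 1 := ⟨a - 1, by omega⟩
    have haa : a * a - a = (b + 1) * b := by rw [hb]; ring_nf; omega
    rw [haa, hb] at key
    have hpb : 8 * b + 8 ≤ p := by omega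
    rw [hb]
    nlinarith [key, hpb, Nat.mul_le_mul_right (b + 1) hpb]
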